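/- In the directed polymer model with environment law ν satisfying the stated conditions, there is a positive constant κ depending only on ν and the dimension d such that for every n ≥ 1 and every β ≥ 0, the probability that there exists a set A ⊆ {1,…,n} with |A| ≥ n/2 and ∑_{k∈A} γ_k ≤ κ|A| is at most e^{−n}. -/

import Mathlib

open MeasureTheory ProbabilityTheory Set
open scoped ENNReal NNReal

noncomputable section

/-- A nearest-neighbor path of length `n` in `ℤ^d` starting from the origin: `toFun 0` is the
origin, and consecutive vertices are nearest neighbors in `ℤ^d`. The vertices of the path (as in
the paper, which omits the starting point) are `toFun 1, …, toFun n`. -/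
structure PolymerPath (d n : ℕ) where
  toFun : Fin (n + 1) → Fin d → ℤ
  start_eq : toFun 0 = 0
  adj : ∀ k : Fin n, (∑ i, |toFun k.succ i - toFun k.castSucc i|) = 1

/-- The `k`-th vertex `x_k` of a path, for `k = 1, …, n` (indexed by `Fin n`). -/
def PolymerPath.vertex {d n : ℕ} (p : PolymerPath d n) (k : Fin n) : Fin d → ℤ :=
  p.toFun k.succ

/-- The overlap `|p ∩ q|`, i.e. the number of indices `k ∈ {1, …, n}` with `x_k = x_k'`. -/
def overlap {d n : ℕ} (p q : PolymerPath d n) : ℕ :=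
  (Finset.univ.filter fun k : Fin n => p.vertex k = q.vertex k).card

/-- The energy `∑_{k=1}^n ω_{k, x_k}` of a path `p` in the environment `env`
(here `env k x` is `ω_{k+1, x}`, i.e. steps are indexed by `Fin n`). -/
def energy {d n : ℕ} (env : Fin n → (Fin d → ℤ) → ℝ) (p : PolymerPath d n) : ℝ :=
  ∑ k : Fin n, env k (p.vertex k)

/-- The Gibbs weight `exp(β ∑_k ω_{k,x_k})` of a path. -/
def pathWeight {d n : ℕ} (β : ℝ) (env : Fin n → (Fin d → ℤ) → ℝ) (p : PolymerPath d n) : ℝ :=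
  Real.exp (β * energy env p)

/-- The partition function `Z = ∑_{p ∈ 𝒫_n} exp(β ∑_k ω_{k,x_k})`. -/
def partitionZ (d n : ℕ) (β : ℝ) (env : Fin n → (Fin d → ℤ) → ℝ) : ℝ :=
  ∑' p : PolymerPath d n, pathWeight β env p

/-- The Gibbs (polymer) measure of a single path. -/
def gibbsProb {d n : ℕ} (β : ℝ) (env : Fin n → (Fin d → ℤ) → ℝ) (p : PolymerPath d n) : ℝ :=
  pathWeight β env p / partitionZ d n β env

/-- `θ_{k,x}`: the Gibbs probability that the path visits `x` at step `k`
(`k : Fin n` represents step `k+1`). -/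
def theta {d n : ℕ} (β : ℝ) (env : Fin n → (Fin d → ℤ) → ℝ) (k : Fin n) (x : Fin d → ℤ) : ℝ :=
  ∑' p : PolymerPath d n, if p.vertex k = x then gibbsProb β env p else 0

/-- `α_k = ∑_{x ∈ ℤ^d} θ_{k,x}²`. -/
def alphaOf {d n : ℕ} (β : ℝ) (env : Fin n → (Fin d → ℤ) → ℝ) (k : Fin n) : ℝ :=
  ∑' x : Fin d → ℤ, (theta β env k x) ^ 2

/-- The mean `m = ∫_a^b x f(x) dx` of the probability density `f` supported on `(a,b)`. -/
def densityMean (a b : ℝ) (f : ℝ → ℝ) : ℝ :=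
  ∫ x in Set.Ioo a b, x * f x

/-- The function `h(x) = (∫_x^b (y − m) f(y) dy) / f(x)` for `x ∈ (a,b)`. -/
def hFun (a b : ℝ) (f : ℝ → ℝ) (x : ℝ) : ℝ :=
  (∫ y in Set.Ioo x b, (y - densityMean a b f) * f y) / f x

/-- The (deterministic-level) environment obtained from the family of random variables `W`
at the sample point `ω`: `env k x = ω_{k,x} = W (k,x) ω`. -/
def envOf {d n : ℕ} {Ω : Type*} (W : Fin n × (Fin d → ℤ) → Ω → ℝ) (ω : Ω) :
    Fin n → (Fin d → ℤ) → ℝ :=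
  fun k x => W (k, x) ω

/-- The σ-algebra `F_k` generated by the random variables `{ω_{j,y} : j ≠ k, y ∈ ℤ^d}`. -/
def sigmaAway {d n : ℕ} {Ω : Type*} [MeasurableSpace Ω]
    (W : Fin n × (Fin d → ℤ) → Ω → ℝ) (k : Fin n) : MeasurableSpace Ω :=
  ⨆ i : {i : Fin n × (Fin d → ℤ) // i.1 ≠ k}, MeasurableSpace.comap (W i.val) inferInstance

/-- The random variable `α_k = ∑_x θ_{k,x}²`, as a function of the sample point. -/
def alphaRV {d n : ℕ} {Ω : Type*} (β : ℝ) (W : Fin n × (Fin d → ℤ) → Ω → ℝ) (k : Fin n)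
    (ω : Ω) : ℝ :=
  alphaOf β (envOf W ω) k

/-- `γ_k = ∑_x h(ω_{k,x}) θ_{k,x}`. -/
def gammaOf {d n : ℕ} (h : ℝ → ℝ) (β : ℝ) (env : Fin n → (Fin d → ℤ) → ℝ) (k : Fin n) : ℝ :=
  ∑' x : Fin d → ℤ, h (env k x) * theta β env k x

/-- The random variable `γ_k`, as a function of the sample point. -/
def gammaRV {d n : ℕ} {Ω : Type*} (h : ℝ → ℝ) (β : ℝ)
    (W : Fin n × (Fin d → ℤ) → Ω → ℝ) (k : Fin n) (ω : Ω) : ℝ :=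
  gammaOf h β (envOf W ω) k

section PathAux

variable {d n : ℕ}

private def pathEmb (p : PolymerPath d n) : Fin n → Fin d → (Finset.Icc (-1 : ℤ) 1) :=
  fun k i => ⟨p.toFun k.succ i - p.toFun k.castSucc i, by
    have h := p.adj k
    have h1 : |p.toFun k.succ i - p.toFun k.castSucc i| ≤ 1 := by
      rw [← h]
      exact Finset.single_le_sum (f := fun j => |p.toFun k.succ j - p.toFun k.castSucc j|)
        (fun j _ => abs_nonneg _) (Finset.mem_univ i)
    have h2 := abs_le.mp h1
    rw [Finset.mem_Icc]
    exact h2⟩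

private lemma pathEmb_injective : Function.Injective (pathEmb (d := d) (n := n)) := by
  intro p q h
  have hstep : ∀ (k : Fin n) (i : Fin d),
      p.toFun k.succ i - p.toFun k.castSucc i = q.toFun k.succ i - q.toFun k.castSucc i := by
    intro k i
    exact Subtype.ext_iff.mp (congrFun (congrFun h k) i)
  have htoFun : ∀ j : Fin (n + 1), p.toFun j = q.toFun j := by
    intro j
    induction j using Fin.induction with
    | zero => rw [p.start_eq, q.start_eq]
    | succ k ih =>
      funext i
      have h1 := hstep k i
      have h2 : p.toFun k.castSucc i = q.toFun k.castSucc i := by rw [ih]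
      linarith
  rcases p with ⟨pt, hps, hpa⟩
  rcases q with ⟨qt, hqs, hqa⟩
  have : pt = qt := funext htoFun
  subst this
  rfl

instance : Finite (PolymerPath d n) := Finite.of_injective _ pathEmb_injective

noncomputable instance : Fintype (PolymerPath d n) := Fintype.ofFinite _

lemma card_polymerPath_le : Fintype.card (PolymerPath d n) ≤ (3 ^ d) ^ n := by
  have h := Fintype.card_le_of_injective _ (pathEmb_injective (d := d) (n := n))
  refine h.trans (le_of_eq ?_)
  have h3 : Fintype.card (Finset.Icc (-1 : ℤ) 1) = 3 := by
    rw [Fintype.card_coe]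
    decide
  simp [Fintype.card_fun, h3]

lemma polymerPath_nonempty (hd : 1 ≤ d) : Nonempty (PolymerPath d n) := by
  refine ⟨⟨fun k i => if i = (⟨0, hd⟩ : Fin d) then ((k : ℕ) % 2 : ℤ) else 0, ?_, ?_⟩⟩
  · funext i
    simp only [Fin.val_zero, Nat.zero_mod, Nat.cast_ofNat, Nat.cast_zero]
    split_ifs <;> rfl
  · intro k
    rw [Finset.sum_eq_single (⟨0, hd⟩ : Fin d)]
    · rw [if_pos rfl, if_pos rfl]
      have hk1 : ((k.succ : Fin (n + 1)) : ℕ) = (k : ℕ) + 1 := rfl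
      have hk2 : ((k.castSucc : Fin (n + 1)) : ℕ) = (k : ℕ) := rfl
      rw [hk1, hk2]
      push_cast
      have : ((k : ℕ) : ℤ) % 2 = 0 ∨ ((k : ℕ) : ℤ) % 2 = 1 := by omega
      have h2 : (((k : ℕ) : ℤ) + 1) % 2 - ((k : ℕ) : ℤ) % 2 = 1 ∨
          (((k : ℕ) : ℤ) + 1) % 2 - ((k : ℕ) : ℤ) % 2 = -1 := by omega
      rcases h2 with h | h <;> rw [h] <;> norm_num
    · intro i _ hi
      rw [if_neg hi, if_neg hi, sub_self, abs_zero]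
    · intro h
      exact absurd (Finset.mem_univ _) h

end PathAux

section GibbsAux

variable {d n : ℕ} {β : ℝ} {env : Fin n → (Fin d → ℤ) → ℝ}

lemma partitionZ_eq : partitionZ d n β env = ∑ p : PolymerPath d n, pathWeight β env p :=
  tsum_fintype _

lemma partitionZ_pos (hd : 1 ≤ d) : 0 < partitionZ d n β env := by
  rw [partitionZ_eq]
  have : Nonempty (PolymerPath d n) := polymerPath_nonempty hd
  exact Finset.sum_pos (fun p _ => Real.exp_pos _) Finset.univ_nonempty

lemma gibbsProb_pos (hd : 1 ≤ d) (p : PolymerPath d n) : 0 < gibbsProb β env p :=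
  div_pos (Real.exp_pos _) (partitionZ_pos hd)

lemma sum_gibbsProb (hd : 1 ≤ d) : ∑ p : PolymerPath d n, gibbsProb β env p = 1 := by
  unfold gibbsProb
  rw [← Finset.sum_div, ← partitionZ_eq, div_self (partitionZ_pos hd).ne']

lemma theta_eq (k : Fin n) (x : Fin d → ℤ) :
    theta β env k x = ∑ p : PolymerPath d n, if p.vertex k = x then gibbsProb β env p else 0 :=
  tsum_fintype _

lemma gammaOf_eq (h : ℝ → ℝ) (k : Fin n) :
    gammaOf h β env k = ∑ p : PolymerPath d n, h (env k (p.vertex k)) * gibbsProb β env p := by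
  classical
  rw [gammaOf]
  have h0 : ∀ x ∉ Finset.image (fun p : PolymerPath d n => p.vertex k) Finset.univ,
      h (env k x) * theta β env k x = 0 := by
    intro x hx
    have : theta β env k x = 0 := by
      rw [theta_eq]
      apply Finset.sum_eq_zero
      intro p _
      rw [if_neg]
      intro hpx
      exact hx (Finset.mem_image.mpr ⟨p, Finset.mem_univ _, hpx⟩)
    rw [this, mul_zero]
  rw [tsum_eq_sum h0]
  simp_rw [theta_eq, Finset.mul_sum]
  rw [Finset.sum_comm]
  apply Finset.sum_congr rfl
  intro p _
  simp_rw [mul_ite, mul_zero]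
  rw [Finset.sum_ite_eq, if_pos (Finset.mem_image.mpr ⟨p, Finset.mem_univ _, rfl⟩)]

lemma exists_path_le (hd : 1 ≤ d) (h : ℝ → ℝ) (A : Finset (Fin n)) (c : ℝ)
    (hc : ∑ k ∈ A, gammaOf h β env k ≤ c) :
    ∃ p : PolymerPath d n, ∑ k ∈ A, h (env k (p.vertex k)) ≤ c := by
  by_contra hcon
  push_neg at hcon
  have key : ∑ k ∈ A, gammaOf h β env k
      = ∑ p : PolymerPath d n, (∑ k ∈ A, h (env k (p.vertex k))) * gibbsProb β env p := by
    simp_rw [gammaOf_eq h, Finset.sum_mul]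
    rw [Finset.sum_comm]
  have hne : Nonempty (PolymerPath d n) := polymerPath_nonempty hd
  have hlt : c * 1 < ∑ p : PolymerPath d n,
      (∑ k ∈ A, h (env k (p.vertex k))) * gibbsProb β env p := by
    calc c * 1 = ∑ p : PolymerPath d n, c * gibbsProb β env p := by
          rw [← Finset.mul_sum, sum_gibbsProb hd]
      _ < _ := Finset.sum_lt_sum_of_nonempty Finset.univ_nonempty
          (fun p _ => mul_lt_mul_of_pos_right (hcon p) (gibbsProb_pos hd p))
  rw [← key] at hlt
  linarith

end GibbsAux

section DensityAux

variable {a b : ℝ} {f : ℝ → ℝ}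

lemma measurable_of_contOn_zero {g : ℝ → ℝ} {s : Set ℝ} (hs : IsOpen s)
    (hcont : ContinuousOn g s) (h0 : ∀ x ∉ s, g x = 0) : Measurable g := by
  classical
  apply measurable_of_isOpen
  intro t ht
  have hdecomp : g ⁻¹' t = (s ∩ g ⁻¹' t) ∪ (sᶜ ∩ g ⁻¹' t) := by
    ext x; by_cases hx : x ∈ s <;> simp [hx]
  rw [hdecomp]
  refine MeasurableSet.union (hcont.isOpen_inter_preimage hs ht).measurableSet ?_
  have heq : sᶜ ∩ g ⁻¹' t = if (0 : ℝ) ∈ t then sᶜ else (∅ : Set ℝ) := by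
    split_ifs with h0t
    · ext x
      simp only [mem_inter_iff, mem_compl_iff, mem_preimage]
      exact ⟨fun hx => hx.1, fun hx => ⟨hx, by rw [h0 x hx]; exact h0t⟩⟩
    · ext x
      simp only [mem_inter_iff, mem_compl_iff, mem_preimage, mem_empty_iff_false, iff_false,
        not_and]
      intro hx1 hx2
      rw [h0 x hx1] at hx2
      exact h0t hx2
  rw [heq]
  split_ifs
  · exact hs.isClosed_compl.measurableSet
  · exact MeasurableSet.empty

lemma f_measurable (hf_diff : ∀ x ∈ Ioo a b, DifferentiableAt ℝ f x)
    (hf_zero : ∀ x ∉ Ioo a b, f x = 0) : Measurable f :=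
  measurable_of_contOn_zero isOpen_Ioo
    (fun x hx => (hf_diff x hx).continuousAt.continuousWithinAt) hf_zero

lemma mulf_integrableOn (hf_int : Integrable f volume)
    {φ : ℝ → ℝ} (hφ : Measurable φ) {C : ℝ} (hC : ∀ y ∈ Ioo a b, |φ y| ≤ C) :
    IntegrableOn (fun y => φ y * f y) (Ioo a b) volume := by
  apply Integrable.bdd_mul hf_int.integrableOn hφ.aestronglyMeasurable
  rw [ae_restrict_iff' measurableSet_Ioo]
  exact ae_of_all _ fun y hy => by simpa [Real.norm_eq_abs] using hC y hy

lemma abs_bound_on_Ioo {m : ℝ} : ∀ y ∈ Ioo a b, |y - m| ≤ |a| + |b| + |m| := by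
  intro y hy
  have h1 : -(|a| + |b|) ≤ y := by
    have := neg_abs_le a
    have := abs_nonneg b
    linarith [hy.1]
  have h2 : y ≤ |a| + |b| := by
    have := le_abs_self b
    have := abs_nonneg a
    linarith [hy.2]
  rw [abs_le]
  constructor
  · linarith [le_abs_self m]
  · linarith [neg_abs_le m]

lemma g0_integrableOn (hf_meas : Measurable f) (hf_int : Integrable f volume) :
    IntegrableOn (fun y => (y - densityMean a b f) * f y) (Ioo a b) volume :=
  mulf_integrableOn hf_int (measurable_id.sub_const _) abs_bound_on_Ioo

lemma g0_supp (hf_zero : ∀ x ∉ Ioo a b, f x = 0) :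
    Function.support (fun y => (y - densityMean a b f) * f y) ⊆ Ioo a b := by
  intro x hx
  by_contra h
  exact hx (by simp [hf_zero x h])

lemma g0_integrable (hf_zero : ∀ x ∉ Ioo a b, f x = 0) (hf_meas : Measurable f)
    (hf_int : Integrable f volume) :
    Integrable (fun y => (y - densityMean a b f) * f y) volume := by
  have h := (Set.indicator_eq_self.mpr (g0_supp (f := f) (a := a) (b := b) hf_zero))
  rw [← h]
  exact (integrable_indicator_iff measurableSet_Ioo).mpr (g0_integrableOn hf_meas hf_int)

lemma idf_integrableOn (hf_int : Integrable f volume) :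
    IntegrableOn (fun y => y * f y) (Ioo a b) volume :=
  mulf_integrableOn hf_int measurable_id
    (fun y hy => by simpa [sub_zero] using abs_bound_on_Ioo (m := 0) y hy)

lemma T0_eq (hf_int : Integrable f volume)
    (hIoo_f : ∫ x in Ioo a b, f x = 1) :
    ∫ y in Ioo a b, (y - densityMean a b f) * f y = 0 := by
  have h1 : ∫ y in Ioo a b, (y - densityMean a b f) * f y
      = (∫ y in Ioo a b, y * f y) - ∫ y in Ioo a b, densityMean a b f * f y := by
    rw [← integral_sub (idf_integrableOn hf_int) ((hf_int.integrableOn).const_mul _)]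
    exact integral_congr_ae (ae_of_all _ fun y => by ring)
  rw [h1, integral_const_mul, hIoo_f]
  have h2 : ∫ y in Ioo a b, y * f y = densityMean a b f := rfl
  rw [h2]
  ring

lemma Nfun_measurable (hf_zero : ∀ x ∉ Ioo a b, f x = 0) (hf_meas : Measurable f)
    (hf_int : Integrable f volume) :
    Measurable (fun x => ∫ y in Ioo x b, (y - densityMean a b f) * f y) := by
  set g0 : ℝ → ℝ := fun y => (y - densityMean a b f) * f y with hg0
  have hg0_int : Integrable g0 volume := g0_integrable hf_zero hf_meas hf_int
  have hpos_int : Integrable (fun y => max (g0 y) 0) volume := hg0_int.pos_part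
  have hneg_int : Integrable (fun y => max (-g0 y) 0) volume := hg0_int.neg.pos_part
  have hanti : ∀ (g : ℝ → ℝ), Integrable g volume → (∀ y, 0 ≤ g y) →
      Antitone (fun x => ∫ y in Ioo x b, g y) := by
    intro g hint hpos x x' hxx'
    exact setIntegral_mono_set hint.integrableOn (ae_of_all _ hpos)
      (HasSubset.Subset.eventuallyLE (Ioo_subset_Ioo_left hxx'))
  have hdecomp : (fun x => ∫ y in Ioo x b, g0 y)
      = fun x => (∫ y in Ioo x b, max (g0 y) 0) - ∫ y in Ioo x b, max (-g0 y) 0 := by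
    funext x
    rw [← integral_sub hpos_int.integrableOn hneg_int.integrableOn]
    exact integral_congr_ae (ae_of_all _ fun y => (max_zero_sub_max_neg_zero_eq_self _).symm)
  rw [show (fun x => ∫ y in Ioo x b, (y - densityMean a b f) * f y)
      = (fun x => ∫ y in Ioo x b, g0 y) from rfl, hdecomp]
  exact ((hanti _ hpos_int fun y => le_max_right _ _).measurable).sub
    ((hanti _ hneg_int fun y => le_max_right _ _).measurable)

lemma Nfun_pos (hab : a < b) (hf_pos : ∀ x ∈ Ioo a b, 0 < f x)
    (hf_zero : ∀ x ∉ Ioo a b, f x = 0) (hf_meas : Measurable f)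
    (hf_int : Integrable f volume) (hIoo_f : ∫ x in Ioo a b, f x = 1) :
    ∀ x ∈ Ioo a b, 0 < ∫ y in Ioo x b, (y - densityMean a b f) * f y := by
  set m : ℝ := densityMean a b f with hm
  set g0 : ℝ → ℝ := fun y => (y - m) * f y with hg0
  have hg0_int : Integrable g0 volume := g0_integrable hf_zero hf_meas hf_int
  intro x hx
  rcases le_or_gt m x with hmx | hxm
  · -- m ≤ x : integrand positive on Ioo x b
    have hposOn : ∀ y ∈ Ioo x b, 0 < g0 y := fun y hy =>
      mul_pos (by linarith [hy.1]) (hf_pos y ⟨lt_trans hx.1 hy.1, hy.2⟩)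
    rw [setIntegral_pos_iff_support_of_nonneg_ae
      ((ae_restrict_iff' measurableSet_Ioo).mpr (ae_of_all _ fun y hy => (hposOn y hy).le))
      hg0_int.integrableOn]
    calc (0 : ℝ≥0∞) < volume (Ioo x b) := by
          rw [Real.volume_Ioo]; exact ENNReal.ofReal_pos.mpr (by linarith [hx.2])
      _ ≤ volume (Function.support g0 ∩ Ioo x b) :=
          measure_mono fun y hy => ⟨(hposOn y hy).ne', hy⟩
  · -- x < m : use that the full integral vanishes
    have hsplit : Ioo a b = Ioc a x ∪ Ioo x b := by
      ext y
      simp only [mem_Ioo, mem_Ioc, mem_union]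
      constructor
      · rintro ⟨h1, h2⟩
        rcases le_or_gt y x with h | h
        · exact Or.inl ⟨h1, h⟩
        · exact Or.inr ⟨h, h2⟩
      · rintro (⟨h1, h2⟩ | ⟨h1, h2⟩)
        · exact ⟨h1, lt_of_le_of_lt h2 hx.2⟩
        · exact ⟨lt_trans hx.1 h1, h2⟩
    have hdisj : Disjoint (Ioc a x) (Ioo x b) := by
      rw [Set.disjoint_left]
      rintro y ⟨_, h2⟩ ⟨h3, _⟩
      exact absurd h3 (not_lt.mpr h2)
    have hsum : (∫ y in Ioc a x, g0 y) + (∫ y in Ioo x b, g0 y) = 0 := by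
      rw [← setIntegral_union hdisj measurableSet_Ioo hg0_int.integrableOn
        hg0_int.integrableOn, ← hsplit]
      exact T0_eq hf_int hIoo_f
    have hneg : ∫ y in Ioc a x, g0 y < 0 := by
      have hpos2 : 0 < ∫ y in Ioc a x, -g0 y := by
        have hposOn : ∀ y ∈ Ioc a x, 0 < -g0 y := by
          intro y hy
          have hyb : y ∈ Ioo a b := ⟨hy.1, lt_of_le_of_lt hy.2 hx.2⟩
          have : -g0 y = (m - y) * f y := by simp [hg0]; ring
          rw [this]
          exact mul_pos (by linarith [hy.2]) (hf_pos y hyb)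
        rw [setIntegral_pos_iff_support_of_nonneg_ae
          ((ae_restrict_iff' measurableSet_Ioc).mpr (ae_of_all _ fun y hy => (hposOn y hy).le))
          hg0_int.neg.integrableOn]
        calc (0 : ℝ≥0∞) < volume (Ioc a x) := by
              rw [Real.volume_Ioc]; exact ENNReal.ofReal_pos.mpr (by linarith [hx.1])
          _ ≤ volume (Function.support (fun y => -g0 y) ∩ Ioc a x) :=
              measure_mono fun y hy => ⟨(hposOn y hy).ne', hy⟩
      rw [integral_neg] at hpos2
      linarith
    linarith

lemma hFun_nonneg (hab : a < b) (hf_pos : ∀ x ∈ Ioo a b, 0 < f x)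
    (hf_zero : ∀ x ∉ Ioo a b, f x = 0) (hf_meas : Measurable f)
    (hf_int : Integrable f volume) (hIoo_f : ∫ x in Ioo a b, f x = 1) :
    ∀ x, 0 ≤ hFun a b f x := by
  intro x
  by_cases hx : x ∈ Ioo a b
  · exact div_nonneg (Nfun_pos hab hf_pos hf_zero hf_meas hf_int hIoo_f x hx).le
      (hf_pos x hx).le
  · rw [hFun, hf_zero x hx, div_zero]

lemma hFun_pos (hab : a < b) (hf_pos : ∀ x ∈ Ioo a b, 0 < f x)
    (hf_zero : ∀ x ∉ Ioo a b, f x = 0) (hf_meas : Measurable f)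
    (hf_int : Integrable f volume) (hIoo_f : ∫ x in Ioo a b, f x = 1) :
    ∀ x ∈ Ioo a b, 0 < hFun a b f x := fun x hx =>
  div_pos (Nfun_pos hab hf_pos hf_zero hf_meas hf_int hIoo_f x hx) (hf_pos x hx)

lemma hFun_measurable (hf_zero : ∀ x ∉ Ioo a b, f x = 0) (hf_meas : Measurable f)
    (hf_int : Integrable f volume) : Measurable (hFun a b f) :=
  (Nfun_measurable hf_zero hf_meas hf_int).div hf_meas

end DensityAux

/-- Lemma 2.8: there is a constant `κ > 0` depending only on `ν` and `d`
such that for every `n ≥ 1` and `β ≥ 0`,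
`P(∃ A ⊆ {1,…,n}, |A| ≥ n/2 and ∑_{k∈A} γ_k ≤ κ|A|) ≤ e^{−n}`. -/
theorem gamma_lower_tail (d : ℕ) (hd : 1 ≤ d)
    (a b : ℝ) (hab : a < b) (f : ℝ → ℝ)
    (hf_pos : ∀ x ∈ Set.Ioo a b, 0 < f x)
    (hf_zero : ∀ x ∉ Set.Ioo a b, f x = 0)
    (hf_diff : ∀ x ∈ Set.Ioo a b, DifferentiableAt ℝ f x)
    (ν : Measure ℝ) (hν : ν = volume.withDensity fun x => ENNReal.ofReal (f x))
    [IsProbabilityMeasure ν]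
    (hh_diff : ∀ x ∈ Set.Ioo a b, DifferentiableAt ℝ (hFun a b f) x)
    (hh_deriv_bdd : ∃ C : ℝ, ∀ x ∈ Set.Ioo a b, |deriv (hFun a b f) x| ≤ C) :
    ∃ κ : ℝ, 0 < κ ∧
      ∀ (n : ℕ), 1 ≤ n → ∀ (β : ℝ), 0 ≤ β →
      ∀ (Ω : Type) [MeasurableSpace Ω] (P : Measure Ω), ∀ _ : IsProbabilityMeasure P,
      ∀ (W : Fin n × (Fin d → ℤ) → Ω → ℝ),
        (∀ i, Measurable (W i)) →
        iIndepFun W P →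
        (∀ i, P.map (W i) = ν) →
        P {ω | ∃ A : Finset (Fin n), (n : ℝ) ≤ 2 * A.card ∧
            ∑ k ∈ A, gammaRV (hFun a b f) β W k ω ≤ κ * A.card}
          ≤ ENNReal.ofReal (Real.exp (-(n : ℝ))) := by
  classical
  have hf_meas : Measurable f := f_measurable hf_diff hf_zero
  have hf_nonneg : ∀ x, 0 ≤ f x := by
    intro x
    by_cases hx : x ∈ Ioo a b
    · exact (hf_pos x hx).le
    · rw [hf_zero x hx]
  have hlint1 : ∫⁻ x, ENNReal.ofReal (f x) ∂volume = 1 := by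
    have h := measure_univ (μ := ν)
    rw [hν, withDensity_apply _ MeasurableSet.univ] at h
    simpa [setLIntegral_univ] using h
  have hf_int : Integrable f volume := by
    refine ⟨hf_meas.aestronglyMeasurable, ?_⟩
    show (∫⁻ x, ‖f x‖ₑ ∂volume) < ⊤
    have hcongr : ∀ x, ‖f x‖ₑ = ENNReal.ofReal (f x) := fun x =>
      Real.enorm_eq_ofReal (hf_nonneg x)
    rw [lintegral_congr hcongr, hlint1]
    exact ENNReal.one_lt_top
  have hf_int1 : ∫ x, f x = 1 := by
    rw [integral_eq_lintegral_of_nonneg_ae (ae_of_all _ hf_nonneg) hf_meas.aestronglyMeasurable,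
      hlint1, ENNReal.toReal_one]
  have hIoo_f : ∫ x in Ioo a b, f x = 1 := by
    have hsupp : Function.support f ⊆ Ioo a b := fun x hx => by
      by_contra h
      exact hx (hf_zero x h)
    rw [← integral_indicator measurableSet_Ioo, Set.indicator_eq_self.mpr hsupp, hf_int1]
  have hh_meas : Measurable (hFun a b f) := hFun_measurable hf_zero hf_meas hf_int
  have hh_nonneg := hFun_nonneg hab hf_pos hf_zero hf_meas hf_int hIoo_f
  have hh_pos := hFun_pos hab hf_pos hf_zero hf_meas hf_int hIoo_f
  -- constants
  have hexp_pos : (0 : ℝ) < Real.exp 1 := Real.exp_pos 1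
  have hexp_ge : (2 : ℝ) ≤ Real.exp 1 := by nlinarith [Real.add_one_le_exp (1 : ℝ)]
  have h3d : (1 : ℝ) ≤ 3 ^ d := by
    calc (1 : ℝ) = 1 ^ d := (one_pow d).symm
      _ ≤ 3 ^ d := pow_le_pow_left₀ (by norm_num) (by norm_num) d
  set δ : ℝ := (2 * 3 ^ d * Real.exp 1)⁻¹ with hδdef
  have hδ_pos : 0 < δ := by rw [hδdef]; positivity
  have hδ_le1 : δ ≤ 1 := by
    rw [hδdef]
    apply inv_le_one_of_one_le₀
    nlinarith
  set ε₀ : ℝ := δ ^ 2 / Real.exp 1 with hε₀def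
  have hε₀_pos : 0 < ε₀ := by rw [hε₀def]; positivity
  -- the Laplace transform of hFun under ν tends to 0
  set q : ℕ → ℝ := fun j => ∫ x, f x * Real.exp (-(j : ℝ) * hFun a b f x) with hqdef
  have hq_meas : ∀ t : ℝ, Measurable fun x => f x * Real.exp (t * hFun a b f x) :=
    fun t => hf_meas.mul ((hh_meas.const_mul t).exp)
  have htend : Filter.Tendsto q Filter.atTop (nhds 0) := by
    have h0 : (0 : ℝ) = ∫ (_ : ℝ), (0 : ℝ) := by simp
    rw [hqdef, h0]
    apply tendsto_integral_of_dominated_convergence f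
      (fun j => (hq_meas _).aestronglyMeasurable) hf_int
    · intro j
      apply ae_of_all
      intro x
      rw [Real.norm_eq_abs, abs_of_nonneg (mul_nonneg (hf_nonneg x) (Real.exp_nonneg _))]
      have h1 : -(j : ℝ) * hFun a b f x ≤ 0 := by
        have := hh_nonneg x
        have : (0 : ℝ) ≤ (j : ℝ) := Nat.cast_nonneg j
        nlinarith [hh_nonneg x]
      exact mul_le_of_le_one_right (hf_nonneg x) (Real.exp_le_one_iff.mpr h1)
    · apply ae_of_all
      intro x
      by_cases hfx : f x = 0
      · simpa [hfx] using (tendsto_const_nhds :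
          Filter.Tendsto (fun _ : ℕ => (0 : ℝ)) Filter.atTop (nhds 0))
      · have hx : x ∈ Ioo a b := by
          by_contra h
          exact hfx (hf_zero x h)
        have hhx : 0 < hFun a b f x := hh_pos x hx
        have hexp : Filter.Tendsto (fun jj : ℕ => Real.exp (-(jj : ℝ) * hFun a b f x))
            Filter.atTop (nhds 0) := by
          apply Real.tendsto_exp_atBot.comp
          have harg : (fun jj : ℕ => -(jj : ℝ) * hFun a b f x)
              = fun jj : ℕ => (jj : ℝ) * (-(hFun a b f x)) := by
            funext jj
            ring
          rw [harg]
          exact Filter.Tendsto.atTop_mul_const_of_neg (by linarith) tendsto_natCast_atTop_atTop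
        have h2 := hexp.const_mul (f x)
        simpa using h2
  obtain ⟨j, hj1, hjq⟩ : ∃ j : ℕ, 1 ≤ j ∧ q j ≤ ε₀ := by
    have h1 := htend.eventually_lt_const hε₀_pos
    have h2 := Filter.eventually_ge_atTop (1 : ℕ)
    obtain ⟨j, hj⟩ := (h1.and h2).exists
    exact ⟨j, hj.2, hj.1.le⟩
  have hq_nonneg : 0 ≤ q j := integral_nonneg fun x =>
    mul_nonneg (hf_nonneg x) (Real.exp_nonneg _)
  have hjR : (0 : ℝ) < (j : ℝ) := by exact_mod_cast hj1
  refine ⟨(j : ℝ)⁻¹, by positivity, ?_⟩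
  intro n hn β hβ Ω mΩ P hP W hWmeas hWindep hWmap
  haveI := hP
  set X : (Fin n × (Fin d → ℤ)) → Ω → ℝ := fun i ω => hFun a b f (W i ω) with hXdef
  have hYmeas : ∀ i, Measurable (X i) := fun i => hh_meas.comp (hWmeas i)
  have hYindep : iIndepFun X P :=
    hWindep.comp (fun _ => hFun a b f) fun _ => hh_meas
  have hmgf : ∀ i, mgf (X i) P (-(j : ℝ)) = q j := by
    intro i
    have hgm : Measurable fun x => Real.exp (-(j : ℝ) * hFun a b f x) :=
      (hh_meas.const_mul _).exp
    have h1 : mgf (X i) P (-(j : ℝ))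
        = ∫ ω, Real.exp (-(j : ℝ) * hFun a b f (W i ω)) ∂P := rfl
    rw [h1, ← integral_map (hWmeas i).aemeasurable hgm.aestronglyMeasurable, hWmap i, hν]
    have h2 : (fun x => ENNReal.ofReal (f x)) = fun x => ((f x).toNNReal : ℝ≥0∞) := rfl
    rw [h2, integral_withDensity_eq_integral_smul hf_meas.real_toNNReal]
    apply integral_congr_ae
    apply ae_of_all
    intro x
    dsimp only
    rw [NNReal.smul_def, Real.coe_toNNReal _ (hf_nonneg x), smul_eq_mul]
  -- Chernoff bound for a fixed (A, p)
  have hchern : ∀ (A : Finset (Fin n)) (p : PolymerPath d n), n ≤ 2 * A.card →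
      P {ω | ∑ k ∈ A, hFun a b f (W (k, p.vertex k) ω) ≤ (j : ℝ)⁻¹ * A.card}
        ≤ ENNReal.ofReal (δ ^ n) := by
    intro A p hcard
    set s : Finset (Fin n × (Fin d → ℤ)) := A.image (fun k => (k, p.vertex k)) with hs
    have hinj : ∀ x ∈ A, ∀ y ∈ A, (x, p.vertex x) = (y, p.vertex y) → x = y :=
      fun x _ y _ hxy => ((Prod.mk.injEq _ _ _ _).mp hxy).1
    have hscard : s.card = A.card := Finset.card_image_of_injOn fun x hx y hy => hinj x hx y hy
    have hSA : ∀ ω, ∑ k ∈ A, hFun a b f (W (k, p.vertex k) ω) = (∑ i ∈ s, X i) ω := by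
      intro ω
      rw [Finset.sum_apply, hs, Finset.sum_image hinj]
    have hSfun_eq : (∑ i ∈ s, X i) = fun ω => ∑ i ∈ s, hFun a b f (W i ω) := by
      funext ω
      rw [Finset.sum_apply]
    have hXsum_meas : Measurable (∑ i ∈ s, X i) := by
      rw [hSfun_eq]
      exact Finset.measurable_sum s fun i _ => hYmeas i
    have hXnonneg : ∀ ω, 0 ≤ (∑ i ∈ s, X i) ω := by
      intro ω
      rw [Finset.sum_apply]
      exact Finset.sum_nonneg fun i _ => hh_nonneg _
    have hint : Integrable (fun ω => Real.exp (-(j : ℝ) * (∑ i ∈ s, X i) ω)) P := by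
      apply Integrable.mono' (integrable_const (1 : ℝ))
        ((hXsum_meas.const_mul _).exp.aestronglyMeasurable)
      apply ae_of_all
      intro ω
      rw [Real.norm_eq_abs, abs_of_nonneg (Real.exp_nonneg _)]
      apply Real.exp_le_one_iff.mpr
      nlinarith [hXnonneg ω, hjR.le]
    have hch := measure_le_le_exp_mul_mgf (μ := P) (X := ∑ i ∈ s, X i)
      ((j : ℝ)⁻¹ * A.card) (neg_nonpos.mpr hjR.le) hint
    rw [hYindep.mgf_sum hYmeas s] at hch
    have hprod : ∏ i ∈ s, mgf (X i) P (-(j : ℝ)) = q j ^ A.card := by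
      rw [Finset.prod_congr rfl fun i _ => hmgf i, Finset.prod_const, hscard]
    rw [hprod] at hch
    have hnum : Real.exp (-(-(j : ℝ)) * ((j : ℝ)⁻¹ * A.card)) * q j ^ A.card ≤ δ ^ n := by
      have h1 : -(-(j : ℝ)) * ((j : ℝ)⁻¹ * A.card) = (A.card : ℝ) := by
        field_simp
      rw [h1]
      have h2 : Real.exp (A.card : ℝ) = Real.exp 1 ^ (A.card : ℕ) := by
        rw [← Real.exp_nat_mul, mul_one]
      rw [h2, ← mul_pow]
      have h4 : Real.exp 1 * q j ≤ δ ^ 2 := by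
        calc Real.exp 1 * q j ≤ Real.exp 1 * ε₀ := by nlinarith
          _ = δ ^ 2 := by
              rw [hε₀def]
              field_simp
      calc (Real.exp 1 * q j) ^ A.card ≤ (δ ^ 2) ^ A.card :=
            pow_le_pow_left₀ (by nlinarith) h4 _
        _ = δ ^ (2 * A.card) := by rw [← pow_mul]
        _ ≤ δ ^ n := pow_le_pow_of_le_one hδ_pos.le hδ_le1 hcard
    have hseteq : {ω | ∑ k ∈ A, hFun a b f (W (k, p.vertex k) ω) ≤ (j : ℝ)⁻¹ * A.card}
        = {ω | (∑ i ∈ s, X i) ω ≤ (j : ℝ)⁻¹ * A.card} := by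
      ext ω
      simp only [Set.mem_setOf_eq, hSA]
    rw [hseteq]
    calc P {ω | (∑ i ∈ s, X i) ω ≤ (j : ℝ)⁻¹ * A.card}
        = ENNReal.ofReal ((P {ω | (∑ i ∈ s, X i) ω ≤ (j : ℝ)⁻¹ * A.card}).toReal) :=
          (ENNReal.ofReal_toReal (measure_ne_top _ _)).symm
      _ ≤ ENNReal.ofReal (δ ^ n) := ENNReal.ofReal_le_ofReal (hch.trans hnum)
  -- union bound
  set 𝒜 : Finset (Finset (Fin n)) := Finset.univ.filter (fun A => n ≤ 2 * A.card) with h𝒜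
  have hsub : {ω | ∃ A : Finset (Fin n), (n : ℝ) ≤ 2 * A.card ∧
      ∑ k ∈ A, gammaRV (hFun a b f) β W k ω ≤ (j : ℝ)⁻¹ * A.card}
      ⊆ ⋃ A ∈ 𝒜, ⋃ p ∈ (Finset.univ : Finset (PolymerPath d n)),
        {ω | ∑ k ∈ A, hFun a b f (W (k, p.vertex k) ω) ≤ (j : ℝ)⁻¹ * A.card} := by
    intro ω hω
    obtain ⟨A, hA1, hA2⟩ := hω
    have hA1' : n ≤ 2 * A.card := by exact_mod_cast hA1
    simp only [gammaRV] at hA2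
    obtain ⟨p, hp⟩ := exists_path_le hd (hFun a b f) A _ hA2
    simp only [Set.mem_iUnion]
    exact ⟨A, Finset.mem_filter.mpr ⟨Finset.mem_univ _, hA1'⟩, p, Finset.mem_univ p, hp⟩
  refine le_trans (measure_mono hsub) ?_
  refine le_trans (measure_biUnion_finset_le 𝒜 _) ?_
  have hstep2 : ∀ A ∈ 𝒜,
      P (⋃ p ∈ (Finset.univ : Finset (PolymerPath d n)),
        {ω | ∑ k ∈ A, hFun a b f (W (k, p.vertex k) ω) ≤ (j : ℝ)⁻¹ * A.card})
      ≤ (Fintype.card (PolymerPath d n) : ℝ≥0∞) * ENNReal.ofReal (δ ^ n) := by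
    intro A hA
    have hA' : n ≤ 2 * A.card := (Finset.mem_filter.mp hA).2
    refine le_trans (measure_biUnion_finset_le _ _) ?_
    calc ∑ p ∈ (Finset.univ : Finset (PolymerPath d n)),
          P {ω | ∑ k ∈ A, hFun a b f (W (k, p.vertex k) ω) ≤ (j : ℝ)⁻¹ * A.card}
        ≤ ∑ _p ∈ (Finset.univ : Finset (PolymerPath d n)), ENNReal.ofReal (δ ^ n) :=
          Finset.sum_le_sum fun p _ => hchern A p hA'
      _ = (Fintype.card (PolymerPath d n) : ℝ≥0∞) * ENNReal.ofReal (δ ^ n) := by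
          rw [Finset.sum_const, Finset.card_univ, nsmul_eq_mul]
  refine le_trans (Finset.sum_le_sum hstep2) ?_
  rw [Finset.sum_const, nsmul_eq_mul, ← mul_assoc]
  -- final numeric computation
  have hM : (Fintype.card (PolymerPath d n) : ℝ) ≤ ((3 : ℝ) ^ d) ^ n := by
    calc (Fintype.card (PolymerPath d n) : ℝ) ≤ (((3 ^ d) ^ n : ℕ) : ℝ) :=
          Nat.cast_le.mpr card_polymerPath_le
      _ = ((3 : ℝ) ^ d) ^ n := by push_cast; ring
  have hAcard : ((𝒜.card : ℕ) : ℝ) ≤ (2 : ℝ) ^ n := by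
    have h1 : 𝒜.card ≤ 2 ^ n := by
      rw [h𝒜]
      calc (Finset.univ.filter fun A : Finset (Fin n) => n ≤ 2 * A.card).card
          ≤ (Finset.univ : Finset (Finset (Fin n))).card := Finset.card_filter_le _ _
        _ = 2 ^ n := by rw [Finset.card_univ, Fintype.card_finset, Fintype.card_fin]
    calc ((𝒜.card : ℕ) : ℝ) ≤ ((2 ^ n : ℕ) : ℝ) := Nat.cast_le.mpr h1
      _ = (2 : ℝ) ^ n := by push_cast; ring
  have hkey : (2 * (3 : ℝ) ^ d) * δ = (Real.exp 1)⁻¹ := by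
    rw [hδdef]
    field_simp
  have hfinal : (𝒜.card : ℝ) * (Fintype.card (PolymerPath d n) : ℝ) * δ ^ n
      ≤ Real.exp (-(n : ℝ)) := by
    have hδn : (0 : ℝ) ≤ δ ^ n := by positivity
    have h1 : (𝒜.card : ℝ) * (Fintype.card (PolymerPath d n) : ℝ)
        ≤ (2 : ℝ) ^ n * ((3 : ℝ) ^ d) ^ n :=
      mul_le_mul hAcard hM (Nat.cast_nonneg _) (by positivity)
    calc (𝒜.card : ℝ) * (Fintype.card (PolymerPath d n) : ℝ) * δ ^ n
        ≤ ((2 : ℝ) ^ n * ((3 : ℝ) ^ d) ^ n) * δ ^ n := mul_le_mul_of_nonneg_right h1 hδn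
      _ = ((2 * (3 : ℝ) ^ d) * δ) ^ n := by rw [mul_pow, mul_pow]
      _ = ((Real.exp 1)⁻¹) ^ n := by rw [hkey]
      _ = Real.exp (-(n : ℝ)) := by
          rw [← Real.exp_neg, ← Real.exp_nat_mul]
          congr 1
          ring
  calc (𝒜.card : ℝ≥0∞) * (Fintype.card (PolymerPath d n) : ℝ≥0∞) * ENNReal.ofReal (δ ^ n)
      = ENNReal.ofReal ((𝒜.card : ℝ) * (Fintype.card (PolymerPath d n) : ℝ) * δ ^ n) := by
        rw [ENNReal.ofReal_mul (by positivity), ENNReal.ofReal_mul (by positivity),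
          ENNReal.ofReal_natCast, ENNReal.ofReal_natCast]
    _ ≤ ENNReal.ofReal (Real.exp (-(n : ℝ))) := ENNReal.ofReal_le_ofReal hfinal

end
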